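/- Forwarding lemma: let G be a graph, β ≥ 1, S ⊆ V, and u ∈ S with deg_G(u) ≥ β+1. If σ_{S,β}(u) > ℓ_β(u) (in particular ℓ_β(u) ≠ ∞), then there exists a node w ∈ F(σ_{S,β}, u) ∩ D(ℓ_β, u) with σ_{S,β}(w) > ℓ_β(w). -/

import Mathlib

open Classical

variable {V : Type*}

/-- `G` has arboricity at most `a`: every subgraph `H` with at least `2` vertices
satisfies `⌈|E(H)|/(|V(H)|-1)⌉ ≤ a`, i.e. `|E(H)| ≤ a * (|V(H)| - 1)`. -/
def HasArboricity (G : SimpleGraph V) (a : ℕ) : Prop :=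
  ∀ H : G.Subgraph, 2 ≤ H.verts.ncard → H.edgeSet.ncard ≤ a * (H.verts.ncard - 1)

/-- Vertices assigned a layer `≤ i` in the iterative construction of the
`S`-induced `β`-partition. -/
noncomputable def assignedUpTo (G : SimpleGraph V) (S : Set V) (β : ℕ) : ℕ → Set V
  | 0 => {v | v ∈ S ∧ (G.neighborSet v).ncard ≤ β}
  | (i+1) => assignedUpTo G S β i ∪
      {v | v ∈ S ∧ ((G.neighborSet v) \ assignedUpTo G S β i).ncard ≤ β}

/-- The `S`-induced `β`-partition `σ_{S,β} : V → ℕ∞`. -/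
noncomputable def indSigma (G : SimpleGraph V) (S : Set V) (β : ℕ) (v : V) : ℕ∞ :=
  if _h : ∃ i, v ∈ assignedUpTo G S β i then (sInf {i | v ∈ assignedUpTo G S β i} : ℕ) else ⊤

/-- Auxiliary definition of the dependency graph, by fuel on the layer. -/
noncomputable def depAux (G : SimpleGraph V) (σ : V → ℕ∞) : ℕ → V → Set V
  | 0, v => if σ v = 0 then {v} else ∅
  | (n+1), v => if σ v = ((n+1 : ℕ) : ℕ∞)
      then insert v (⋃ w ∈ {w | G.Adj v w ∧ σ w < σ v}, depAux G σ n w)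
      else depAux G σ n v

/-- The dependency graph `D(σ, v)`. -/
noncomputable def depGraph (G : SimpleGraph V) (σ : V → ℕ∞) (v : V) : Set V :=
  depAux G σ (σ v).toNat v

/-- A partial `β`-partition: every node with finite layer has at most `β`
neighbors in equal or higher layers. -/
def IsPartialBetaPartition (G : SimpleGraph V) (β : ℕ) (lam : V → ℕ∞) : Prop :=
  ∀ v, lam v ≠ ⊤ → {w | G.Adj v w ∧ lam v ≤ lam w}.ncard ≤ β


lemma assignedUpTo_mono (G : SimpleGraph V) (S : Set V) (β : ℕ) :
    Monotone (assignedUpTo G S β) := by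
  apply monotone_nat_of_le_succ
  intro i
  exact Set.subset_union_left

lemma mem_assignedUpTo_iff (G : SimpleGraph V) (S : Set V) (β : ℕ) (v : V) (i : ℕ) :
    v ∈ assignedUpTo G S β i ↔ indSigma G S β v ≤ i := by
  unfold indSigma
  constructor
  · intro h
    rw [dif_pos ⟨i, h⟩]
    exact_mod_cast Nat.sInf_le h
  · intro h
    by_cases hne : ∃ j, v ∈ assignedUpTo G S β j
    · rw [dif_pos hne] at h
      have h' : sInf {j | v ∈ assignedUpTo G S β j} ≤ i := by exact_mod_cast h
      exact assignedUpTo_mono G S β h' (Nat.sInf_mem hne)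
    · rw [dif_neg hne] at h
      exact absurd h (by simp)

lemma mem_depAux_self (G : SimpleGraph V) (σ : V → ℕ∞) :
    ∀ (n : ℕ) (v : V), σ v ≤ (n : ℕ∞) → v ∈ depAux G σ n v := by
  intro n
  induction n with
  | zero =>
    intro v h
    have h0 : σ v = 0 := le_antisymm (by exact_mod_cast h) zero_le
    simp [depAux, h0]
  | succ n ih =>
    intro v h
    by_cases hv : σ v = ((n+1 : ℕ) : ℕ∞)
    · simp [depAux, hv]
    · have hle : σ v ≤ n := by
        have hlt : σ v < ((n+1 : ℕ) : ℕ∞) := lt_of_le_of_ne h hv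
        have hne : σ v ≠ ⊤ := ne_top_of_lt hlt
        lift σ v to ℕ using hne with m hm
        exact_mod_cast Nat.lt_succ_iff.mp (by exact_mod_cast hlt)
      simp only [depAux]
      rw [if_neg (by exact_mod_cast hv)]
      exact ih v hle

/-- Forwarding lemma: if `u ∈ S`, `deg(u) ≥ β+1`, and
`σ_{S,β}(u) > ℓ_β(u)`, then any forwarding set `F` (a set of `min{deg(u), β+1}`
neighbors of `u` with the highest `σ`-values) contains a node
`w ∈ D(ℓ_β, u)` with `σ_{S,β}(w) > ℓ_β(w)`. -/
theorem forwarding_lemma [Fintype V] (G : SimpleGraph V) (β : ℕ) (hβ : 1 ≤ β)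
    (S : Set V) (u : V) (hu : u ∈ S)
    (hdeg : β + 1 ≤ (G.neighborSet u).ncard)
    (hgt : indSigma G Set.univ β u < indSigma G S β u)
    (F : Set V) (hF1 : F ⊆ G.neighborSet u)
    (hF2 : F.ncard = min ((G.neighborSet u).ncard) (β + 1))
    (hF3 : ∀ w ∈ F, ∀ w' ∈ G.neighborSet u \ F,
      indSigma G S β w' ≤ indSigma G S β w) :
    ∃ w ∈ F, w ∈ depGraph G (indSigma G Set.univ β) u ∧
      indSigma G Set.univ β w < indSigma G S β w := by
  set ℓ := indSigma G Set.univ β with hℓdef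
  set σ := indSigma G S β with hσdef
  have hne : ℓ u ≠ ⊤ := ne_top_of_lt hgt
  obtain ⟨i, hi⟩ := WithTop.ne_top_iff_exists.mp hne
  have hmemu : u ∈ assignedUpTo G Set.univ β i :=
    (mem_assignedUpTo_iff G Set.univ β u i).mpr (le_of_eq hi.symm)
  rcases i with _ | k
  · -- layer 0 impossible since deg ≥ β+1
    simp only [assignedUpTo, Set.mem_setOf_eq] at hmemu
    omega
  -- u not assigned at step k in the natural partition
  have hnotk : u ∉ assignedUpTo G Set.univ β k := by
    intro hmem
    have h2 : ℓ u ≤ (k : ℕ∞) := (mem_assignedUpTo_iff G Set.univ β u k).mp hmem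
    rw [← hi] at h2
    exact absurd (Nat.cast_le.mp h2) (by omega : ¬ k + 1 ≤ k)
  have hA : ((G.neighborSet u) \ assignedUpTo G Set.univ β k).ncard ≤ β := by
    simp only [assignedUpTo, Set.mem_union, Set.mem_setOf_eq] at hmemu
    rcases hmemu with h | h
    · exact absurd h hnotk
    · exact h.2
  -- few neighbors with high natural layer
  set L : Set V := {w | w ∈ G.neighborSet u ∧ (k : ℕ∞) < ℓ w} with hLdef
  have hLeq : L = (G.neighborSet u) \ assignedUpTo G Set.univ β k := by
    ext w
    simp only [hLdef, Set.mem_setOf_eq, Set.mem_diff, mem_assignedUpTo_iff, not_le]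
    rfl
  have hL : L.ncard ≤ β := by rw [hLeq]; exact hA
  -- u not assigned at step k+1 in the S-partition
  have hσu : ¬ σ u ≤ ((k+1 : ℕ) : ℕ∞) := by
    intro hle
    rw [← hi] at hgt
    exact absurd (lt_of_lt_of_le hgt hle) (by exact_mod_cast lt_irrefl _)
  have hnotS : u ∉ assignedUpTo G S β (k+1) := fun hmem =>
    hσu ((mem_assignedUpTo_iff G S β u (k+1)).mp hmem)
  have hB : β + 1 ≤ ((G.neighborSet u) \ assignedUpTo G S β k).ncard := by
    simp only [assignedUpTo, Set.mem_union, Set.mem_setOf_eq, not_or, not_and] at hnotS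
    have := hnotS.2 hu
    omega
  set B : Set V := {w | w ∈ G.neighborSet u ∧ (k : ℕ∞) < σ w} with hBdef
  have hBeq : B = (G.neighborSet u) \ assignedUpTo G S β k := by
    ext w
    simp only [hBdef, Set.mem_setOf_eq, Set.mem_diff, mem_assignedUpTo_iff, not_le]
    rfl
  have hBcard : β + 1 ≤ B.ncard := by rw [hBeq]; exact hB
  have hF2' : F.ncard = β + 1 := by rw [hF2, min_eq_right hdeg]
  -- every member of F has σ > k
  have hFσ : ∀ w ∈ F, (k : ℕ∞) < σ w := by
    by_cases hBF : B ⊆ F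
    · have hEq : B = F := Set.eq_of_subset_of_ncard_le hBF (by omega) (Set.toFinite F)
      intro w hw
      rw [← hEq] at hw
      exact hw.2
    · obtain ⟨w', hw'B, hw'F⟩ := Set.not_subset.mp hBF
      intro w hw
      exact lt_of_lt_of_le hw'B.2 (hF3 w hw w' ⟨hw'B.1, hw'F⟩)
  -- some member of F has low natural layer
  have hex : ∃ w ∈ F, ℓ w ≤ (k : ℕ∞) := by
    by_contra hcon
    push_neg at hcon
    have hsub : F ⊆ L := fun w hw => ⟨hF1 hw, hcon w hw⟩
    have := Set.ncard_le_ncard hsub (Set.toFinite L)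
    omega
  obtain ⟨w, hwF, hwℓ⟩ := hex
  refine ⟨w, hwF, ?_, ?_⟩
  · -- w ∈ depGraph
    have htn : (ℓ u).toNat = k + 1 := by rw [← hi]; exact ENat.toNat_coe (k+1)
    unfold depGraph
    rw [htn]
    simp only [depAux]
    rw [if_pos (by exact_mod_cast hi.symm)]
    refine Set.mem_insert_iff.mpr (Or.inr ?_)
    have hadj : G.Adj u w := hF1 hwF
    have hlt : ℓ w < ℓ u := by
      rw [← hi]
      exact lt_of_le_of_lt hwℓ (Nat.cast_lt.mpr (Nat.lt_succ_self k))
    exact Set.mem_biUnion ⟨hadj, hlt⟩ (mem_depAux_self G ℓ k w hwℓ)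
  · exact lt_of_le_of_lt hwℓ (hFσ w hwF)
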